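/- Let ρ_j : ℝ^d × ℝ^d → [0,∞) be a measurable joint probability density of a pair (x₁, x) and let ρ_m(x) = ∫ ρ_j(x₁, x) dx₁ be the marginal density of x. Let w : ℝ^d × ℝ^d → ℝ^d be measurable with ∫∫ ‖w(x₁,x)‖² ρ_j(x₁,x) dx₁ dx < ∞, and define v*(x) = (∫ w(x₁,x) ρ_j(x₁,x) dx₁) / ρ_m(x) at every x with ρ_m(x) > 0. Then for every measurable u : ℝ^d → ℝ^d with ∫ ‖u(x)‖² ρ_m(x) dx < ∞, one has ∫∫ ‖u(x) − w(x₁,x)‖² ρ_j(x₁,x) dx₁ dx − ∫ ‖u(x) − v*(x)‖² ρ_m(x) dx = ∫∫ ‖w(x₁,x)‖² ρ_j(x₁,x) dx₁ dx − ∫ ‖v*(x)‖² ρ_m(x) dx. In particular, the difference between the conditional flow-matching objective L_CFM(u) = ∫∫ ‖u(x) − w(x₁,x)‖² ρ_j dx₁ dx and the explicit flow-matching objective L_ExFM(u) = ∫ ‖u(x) − v*(x)‖² ρ_m dx does not depend on u, so the two objectives have identical gradients with respect to any parametrization of u. -/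

import Mathlib

open MeasureTheory
open scoped RealInnerProductSpace

/-- Elementary bound `‖a - b‖² ≤ 2‖a‖² + 2‖b‖²`. -/
lemma norm_sub_sq_le_two_mul {E : Type*} [SeminormedAddGroup E] (a b : E) :
    ‖a - b‖ ^ 2 ≤ 2 * ‖a‖ ^ 2 + 2 * ‖b‖ ^ 2 := by
  have h := norm_sub_le a b
  nlinarith [norm_nonneg (a - b), norm_nonneg a, norm_nonneg b, sq_nonneg (‖a‖ - ‖b‖)]

/-- Cauchy–Schwarz inequality for integrals with a nonnegative weight `ρ`. -/
lemma sq_integral_mul_le_weight {α : Type*} [MeasurableSpace α] {μ : Measure α} {ρ h : α → ℝ}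
    (hρ0 : ∀ a, 0 ≤ ρ a)
    (hρ : Integrable ρ μ) (hhρ : Integrable (fun a => h a * ρ a) μ)
    (hh2 : Integrable (fun a => h a ^ 2 * ρ a) μ) :
    (∫ a, h a * ρ a ∂μ) ^ 2 ≤ (∫ a, ρ a ∂μ) * ∫ a, h a ^ 2 * ρ a ∂μ := by
  set A := ∫ a, ρ a ∂μ with hA
  set B := ∫ a, h a * ρ a ∂μ with hB
  set C := ∫ a, h a ^ 2 * ρ a ∂μ with hC
  have key : ∀ t : ℝ, 0 ≤ C - 2 * t * B + t ^ 2 * A := by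
    intro t
    have e : (fun a => (h a - t) ^ 2 * ρ a)
        = fun a => (h a ^ 2 * ρ a - 2 * t * (h a * ρ a)) + t ^ 2 * ρ a := by
      funext a; ring
    have hsub : Integrable (fun a => h a ^ 2 * ρ a - 2 * t * (h a * ρ a)) μ :=
      hh2.sub (hhρ.const_mul (2 * t))
    have h0 : 0 ≤ ∫ a, (h a - t) ^ 2 * ρ a ∂μ :=
      integral_nonneg fun a => mul_nonneg (sq_nonneg _) (hρ0 a)
    rw [e, integral_add hsub (hρ.const_mul (t ^ 2)),
      integral_sub hh2 (hhρ.const_mul (2 * t)), integral_const_mul, integral_const_mul] at h0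
    linarith
  have hA0 : 0 ≤ A := integral_nonneg fun a => hρ0 a
  rcases eq_or_lt_of_le hA0 with hA0' | hA0'
  · have hz : ρ =ᵐ[μ] 0 :=
      (integral_eq_zero_iff_of_nonneg (fun a => hρ0 a) hρ).mp hA0'.symm
    have hB0 : B = 0 := by
      rw [hB]
      apply integral_eq_zero_of_ae
      filter_upwards [hz] with a ha
      simp [ha]
    simp [hB0, ← hA0']
  · have k := key (B / A)
    have e : (C - 2 * (B / A) * B + (B / A) ^ 2 * A) * A = A * C - B ^ 2 := by
      field_simp
      ring
    nlinarith [mul_nonneg k hA0'.le]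

/-- Theorem 1 (equality of gradients of the CFM and ExFM losses): the difference
between the two objectives does not depend on the model `u`. -/
theorem exfm_cfm_loss_difference_independent_of_u {d : ℕ}
    (ρj : EuclideanSpace ℝ (Fin d) × EuclideanSpace ℝ (Fin d) → ℝ)
    (hρj_meas : Measurable ρj) (hρj_nonneg : ∀ p, 0 ≤ ρj p)
    (hρj_prob : ∫ p, ρj p = 1)
    (ρm : EuclideanSpace ℝ (Fin d) → ℝ)
    (hρm : ∀ x, ρm x = ∫ x₁, ρj (x₁, x))
    (w : EuclideanSpace ℝ (Fin d) × EuclideanSpace ℝ (Fin d) → EuclideanSpace ℝ (Fin d))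
    (hw_meas : Measurable w)
    (hw_int : Integrable (fun p => ‖w p‖ ^ 2 * ρj p))
    (v : EuclideanSpace ℝ (Fin d) → EuclideanSpace ℝ (Fin d))
    (hv : ∀ x, 0 < ρm x → v x = (ρm x)⁻¹ • ∫ x₁, ρj (x₁, x) • w (x₁, x))
    (u : EuclideanSpace ℝ (Fin d) → EuclideanSpace ℝ (Fin d))
    (hu_meas : Measurable u)
    (hu_int : Integrable (fun x => ‖u x‖ ^ 2 * ρm x)) :
    (∫ x, ∫ x₁, ‖u x - w (x₁, x)‖ ^ 2 * ρj (x₁, x)) -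
      (∫ x, ‖u x - v x‖ ^ 2 * ρm x) =
    (∫ x, ∫ x₁, ‖w (x₁, x)‖ ^ 2 * ρj (x₁, x)) -
      (∫ x, ‖v x‖ ^ 2 * ρm x) := by
  -- joint density is integrable (otherwise its integral would be 0, not 1)
  have hρj_int : Integrable ρj
      ((volume : Measure (EuclideanSpace ℝ (Fin d))).prod volume) :=
    integrable_of_integral_eq_one hρj_prob
  have hw_int2 : Integrable (fun p => ‖w p‖ ^ 2 * ρj p)
      ((volume : Measure (EuclideanSpace ℝ (Fin d))).prod volume) := hw_int
  -- marginal density properties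
  have hρm_nonneg : ∀ x, 0 ≤ ρm x := fun x => by
    rw [hρm x]; exact integral_nonneg fun x₁ => hρj_nonneg _
  have hρm_eqfun : ρm = fun x => ∫ x₁, ρj (x₁, x) := funext hρm
  have hρm_sm : StronglyMeasurable ρm := by
    rw [hρm_eqfun]
    exact hρj_meas.stronglyMeasurable.integral_prod_left'
  have hρm_meas : Measurable ρm := hρm_sm.measurable
  -- the second moment of `w` in the slice
  have hg_int : Integrable (fun x => ∫ x₁, ‖w (x₁, x)‖ ^ 2 * ρj (x₁, x)) :=
    hw_int2.integral_prod_right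
  have hg_nonneg : ∀ x, 0 ≤ ∫ x₁, ‖w (x₁, x)‖ ^ 2 * ρj (x₁, x) := fun x =>
    integral_nonneg fun x₁ => mul_nonneg (sq_nonneg _) (hρj_nonneg _)
  -- a.e. slice integrability
  have hslice : ∀ᵐ x : EuclideanSpace ℝ (Fin d), Integrable (fun x₁ => ρj (x₁, x)) ∧
      Integrable (fun x₁ => ‖w (x₁, x)‖ ^ 2 * ρj (x₁, x)) :=
    hρj_int.prod_left_ae.and hw_int2.prod_left_ae
  -- master pointwise statement
  have master : ∀ᵐ x : EuclideanSpace ℝ (Fin d),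
      ((∫ x₁, ‖u x - w (x₁, x)‖ ^ 2 * ρj (x₁, x)) - ‖u x - v x‖ ^ 2 * ρm x
        = (∫ x₁, ‖w (x₁, x)‖ ^ 2 * ρj (x₁, x)) - ‖v x‖ ^ 2 * ρm x) ∧
      ((∫ x₁, ‖u x - w (x₁, x)‖ ^ 2 * ρj (x₁, x))
        ≤ 2 * (‖u x‖ ^ 2 * ρm x) + 2 * ∫ x₁, ‖w (x₁, x)‖ ^ 2 * ρj (x₁, x)) ∧
      (‖v x‖ ^ 2 * ρm x ≤ ∫ x₁, ‖w (x₁, x)‖ ^ 2 * ρj (x₁, x)) ∧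
      (‖u x - v x‖ ^ 2 * ρm x
        = ‖u x - (ρm x)⁻¹ • ∫ x₁, ρj (x₁, x) • w (x₁, x)‖ ^ 2 * ρm x) ∧
      (‖v x‖ ^ 2 * ρm x
        = ‖(ρm x)⁻¹ • ∫ x₁, ρj (x₁, x) • w (x₁, x)‖ ^ 2 * ρm x) := by
    filter_upwards [hslice] with x hx
    obtain ⟨h1, h2⟩ := hx
    have hmρ_meas : Measurable fun x₁ => ρj (x₁, x) :=
      hρj_meas.comp measurable_prodMk_right
    have hws_meas : Measurable fun x₁ => w (x₁, x) :=
      hw_meas.comp measurable_prodMk_right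
    have hbound_int : Integrable (fun x₁ => ρj (x₁, x) + ‖w (x₁, x)‖ ^ 2 * ρj (x₁, x)) :=
      h1.add h2
    -- slice integrability of `‖w‖ * ρj`
    have hwnρ : Integrable (fun x₁ => ‖w (x₁, x)‖ * ρj (x₁, x)) := by
      refine hbound_int.mono
        ((hws_meas.norm.mul hmρ_meas)).aestronglyMeasurable
        (Filter.Eventually.of_forall fun x₁ => ?_)
      have h1' := hρj_nonneg (x₁, x)
      have h2' := norm_nonneg (w (x₁, x))
      rw [Real.norm_of_nonneg (mul_nonneg h2' h1'),
        Real.norm_of_nonneg (add_nonneg h1' (mul_nonneg (sq_nonneg _) h1'))]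
      nlinarith [mul_nonneg h1' (sq_nonneg (‖w (x₁, x)‖ - 1))]
    -- slice integrability of `ρj • w`
    have hwρ : Integrable (fun x₁ => ρj (x₁, x) • w (x₁, x)) := by
      refine hbound_int.mono
        ((hmρ_meas.smul hws_meas)).aestronglyMeasurable
        (Filter.Eventually.of_forall fun x₁ => ?_)
      have h1' := hρj_nonneg (x₁, x)
      have h2' := norm_nonneg (w (x₁, x))
      rw [norm_smul, Real.norm_of_nonneg h1',
        Real.norm_of_nonneg (add_nonneg h1' (mul_nonneg (sq_nonneg _) h1'))]
      nlinarith [mul_nonneg h1' (sq_nonneg (‖w (x₁, x)‖ - 1))]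
    have hρm_eq : ρm x = ∫ x₁, ρj (x₁, x) := hρm x
    have hρm0 : 0 ≤ ρm x := hρm_nonneg x
    -- slice integrability of the CFM integrand
    have hb_int : Integrable (fun x₁ => 2 * ‖u x‖ ^ 2 * ρj (x₁, x)
        + 2 * (‖w (x₁, x)‖ ^ 2 * ρj (x₁, x))) :=
      (h1.const_mul (2 * ‖u x‖ ^ 2)).add (h2.const_mul 2)
    have hf1_slice : Integrable (fun x₁ => ‖u x - w (x₁, x)‖ ^ 2 * ρj (x₁, x)) := by
      refine hb_int.mono
        (((measurable_const.sub hws_meas).norm.pow_const 2).mul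
          hmρ_meas).aestronglyMeasurable
        (Filter.Eventually.of_forall fun x₁ => ?_)
      have h1' := hρj_nonneg (x₁, x)
      have hb := norm_sub_sq_le_two_mul (u x) (w (x₁, x))
      have hnn : 0 ≤ 2 * ‖u x‖ ^ 2 * ρj (x₁, x) + 2 * (‖w (x₁, x)‖ ^ 2 * ρj (x₁, x)) :=
        add_nonneg (mul_nonneg (mul_nonneg zero_le_two (sq_nonneg _)) h1')
          (mul_nonneg zero_le_two (mul_nonneg (sq_nonneg _) h1'))
      rw [Real.norm_of_nonneg (mul_nonneg (sq_nonneg _) h1'), Real.norm_of_nonneg hnn]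
      nlinarith [mul_le_mul_of_nonneg_right hb h1']
    -- the domination bound (b), valid for every such x
    have hBb : (∫ x₁, ‖u x - w (x₁, x)‖ ^ 2 * ρj (x₁, x))
        ≤ 2 * (‖u x‖ ^ 2 * ρm x) + 2 * ∫ x₁, ‖w (x₁, x)‖ ^ 2 * ρj (x₁, x) := by
      have hmono : (∫ x₁, ‖u x - w (x₁, x)‖ ^ 2 * ρj (x₁, x))
          ≤ ∫ x₁, (2 * ‖u x‖ ^ 2 * ρj (x₁, x)
            + 2 * (‖w (x₁, x)‖ ^ 2 * ρj (x₁, x))) := by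
        refine integral_mono hf1_slice hb_int fun x₁ => ?_
        have h1' := hρj_nonneg (x₁, x)
        have hb := norm_sub_sq_le_two_mul (u x) (w (x₁, x))
        nlinarith [mul_le_mul_of_nonneg_right hb h1']
      rw [integral_add (h1.const_mul (2 * ‖u x‖ ^ 2)) (h2.const_mul 2),
        integral_const_mul, integral_const_mul, ← hρm_eq] at hmono
      linarith
    rcases eq_or_lt_of_le hρm0 with hm | hm
    · -- the marginal vanishes: all terms vanish
      have hz : (fun x₁ => ρj (x₁, x)) =ᵐ[volume] 0 :=
        (integral_eq_zero_iff_of_nonneg (fun x₁ => hρj_nonneg _) h1).mp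
          (by rw [← hρm_eq]; exact hm.symm)
      have hf1z : (∫ x₁, ‖u x - w (x₁, x)‖ ^ 2 * ρj (x₁, x)) = 0 := by
        apply integral_eq_zero_of_ae
        filter_upwards [hz] with x₁ h0
        simp only [Pi.zero_apply] at h0
        simp [h0]
      have hgz : (∫ x₁, ‖w (x₁, x)‖ ^ 2 * ρj (x₁, x)) = 0 := by
        apply integral_eq_zero_of_ae
        filter_upwards [hz] with x₁ h0
        simp only [Pi.zero_apply] at h0
        simp [h0]
      refine ⟨?_, hBb, ?_, ?_, ?_⟩ <;> simp [hf1z, hgz, ← hm]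
    · -- positive marginal
      have hne : ρm x ≠ 0 := hm.ne'
      have hvx : v x = (ρm x)⁻¹ • ∫ x₁, ρj (x₁, x) • w (x₁, x) := hv x hm
      -- Cauchy–Schwarz bound for the conditional mean
      have hcs : ‖∫ x₁, ρj (x₁, x) • w (x₁, x)‖ ^ 2
          ≤ ρm x * ∫ x₁, ‖w (x₁, x)‖ ^ 2 * ρj (x₁, x) := by
        have hb : ‖∫ x₁, ρj (x₁, x) • w (x₁, x)‖
            ≤ ∫ x₁, ‖w (x₁, x)‖ * ρj (x₁, x) := by
          refine (norm_integral_le_integral_norm _).trans_eq ?_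
          congr 1
          funext x₁
          rw [norm_smul, Real.norm_of_nonneg (hρj_nonneg _), mul_comm]
        have hCS := sq_integral_mul_le_weight
          (μ := (volume : Measure (EuclideanSpace ℝ (Fin d))))
          (ρ := fun x₁ => ρj (x₁, x)) (h := fun x₁ => ‖w (x₁, x)‖)
          (fun x₁ => hρj_nonneg _) h1 hwnρ h2
        calc ‖∫ x₁, ρj (x₁, x) • w (x₁, x)‖ ^ 2
            ≤ (∫ x₁, ‖w (x₁, x)‖ * ρj (x₁, x)) ^ 2 :=
              pow_le_pow_left₀ (norm_nonneg _) hb 2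
          _ ≤ (∫ x₁, ρj (x₁, x)) * ∫ x₁, ‖w (x₁, x)‖ ^ 2 * ρj (x₁, x) := hCS
          _ = ρm x * ∫ x₁, ‖w (x₁, x)‖ ^ 2 * ρj (x₁, x) := by rw [← hρm_eq]
      -- (c): second moment of v bounded by g
      have hc : ‖v x‖ ^ 2 * ρm x ≤ ∫ x₁, ‖w (x₁, x)‖ ^ 2 * ρj (x₁, x) := by
        rw [hvx, norm_smul, Real.norm_of_nonneg (inv_nonneg.mpr hρm0)]
        have e : ((ρm x)⁻¹ * ‖∫ x₁, ρj (x₁, x) • w (x₁, x)‖) ^ 2 * ρm x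
            = ‖∫ x₁, ρj (x₁, x) • w (x₁, x)‖ ^ 2 * (ρm x)⁻¹ := by
          field_simp
        rw [e]
        calc ‖∫ x₁, ρj (x₁, x) • w (x₁, x)‖ ^ 2 * (ρm x)⁻¹
            ≤ (ρm x * ∫ x₁, ‖w (x₁, x)‖ ^ 2 * ρj (x₁, x)) * (ρm x)⁻¹ :=
              mul_le_mul_of_nonneg_right hcs (inv_nonneg.mpr hρm0)
          _ = ∫ x₁, ‖w (x₁, x)‖ ^ 2 * ρj (x₁, x) := by
              field_simp
      -- cross term integrability
      have hinner : Integrable (fun x₁ => ⟪u x, w (x₁, x)⟫ * ρj (x₁, x)) := by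
        refine (hwρ.const_inner (u x)).congr (Filter.Eventually.of_forall fun x₁ => ?_)
        simp only [real_inner_smul_right]
        ring
      -- cross term value
      have e2 : ∫ x₁, ⟪u x, w (x₁, x)⟫ * ρj (x₁, x)
          = ⟪u x, ∫ x₁, ρj (x₁, x) • w (x₁, x)⟫ := by
        rw [← integral_inner hwρ (u x)]
        refine integral_congr_ae (Filter.Eventually.of_forall fun x₁ => ?_)
        simp only [real_inner_smul_right]
        ring
      -- CFM slice expansion
      have hf1x : (∫ x₁, ‖u x - w (x₁, x)‖ ^ 2 * ρj (x₁, x))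
          = ‖u x‖ ^ 2 * ρm x - 2 * ⟪u x, ∫ x₁, ρj (x₁, x) • w (x₁, x)⟫
            + ∫ x₁, ‖w (x₁, x)‖ ^ 2 * ρj (x₁, x) := by
        have e1 : (fun x₁ => ‖u x - w (x₁, x)‖ ^ 2 * ρj (x₁, x))
            = fun x₁ => (‖u x‖ ^ 2 * ρj (x₁, x)
              - 2 * (⟪u x, w (x₁, x)⟫ * ρj (x₁, x)))
              + ‖w (x₁, x)‖ ^ 2 * ρj (x₁, x) := by
          funext x₁
          rw [norm_sub_sq_real]
          ring
        have hsub : Integrable (fun x₁ => ‖u x‖ ^ 2 * ρj (x₁, x)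
            - 2 * (⟪u x, w (x₁, x)⟫ * ρj (x₁, x))) :=
          (h1.const_mul (‖u x‖ ^ 2)).sub (hinner.const_mul 2)
        rw [e1, integral_add hsub h2,
          integral_sub (h1.const_mul (‖u x‖ ^ 2)) (hinner.const_mul 2),
          integral_const_mul, integral_const_mul, e2, ← hρm_eq]
      -- ExFM slice expansion
      have e3 : ⟪u x, v x⟫ * ρm x
          = ⟪u x, ∫ x₁, ρj (x₁, x) • w (x₁, x)⟫ := by
        rw [hvx, real_inner_smul_right]
        field_simp
      have hf2x : ‖u x - v x‖ ^ 2 * ρm x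
          = ‖u x‖ ^ 2 * ρm x - 2 * ⟪u x, ∫ x₁, ρj (x₁, x) • w (x₁, x)⟫
            + ‖v x‖ ^ 2 * ρm x := by
        have e4 : ‖u x - v x‖ ^ 2 * ρm x
            = ‖u x‖ ^ 2 * ρm x - 2 * (⟪u x, v x⟫ * ρm x) + ‖v x‖ ^ 2 * ρm x := by
          rw [norm_sub_sq_real]
          ring
        rw [e4, e3]
      exact ⟨by rw [hf1x, hf2x]; ring, hBb, hc, by rw [hvx], by rw [hvx]⟩
  -- measurable versions of the `v`-dependent integrands
  have hW_meas : Measurable (fun x => ∫ x₁, ρj (x₁, x) • w (x₁, x)) :=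
    (hρj_meas.stronglyMeasurable.smul
      hw_meas.stronglyMeasurable).integral_prod_left'.measurable
  have hf4_meas : Measurable (fun x =>
      ‖(ρm x)⁻¹ • ∫ x₁, ρj (x₁, x) • w (x₁, x)‖ ^ 2 * ρm x) :=
    (((hρm_meas.inv.smul hW_meas).norm.pow_const 2).mul hρm_meas)
  have hf2_meas : Measurable (fun x =>
      ‖u x - (ρm x)⁻¹ • ∫ x₁, ρj (x₁, x) • w (x₁, x)‖ ^ 2 * ρm x) :=
    ((((hu_meas.sub (hρm_meas.inv.smul hW_meas)).norm.pow_const 2)).mul hρm_meas)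
  -- integrability of the four integrands
  have hf4_int : Integrable (fun x => ‖v x‖ ^ 2 * ρm x) := by
    refine hg_int.mono ?_ ?_
    · exact hf4_meas.aestronglyMeasurable.congr
        (by filter_upwards [master] with x hx; exact hx.2.2.2.2.symm)
    · filter_upwards [master] with x hx
      rw [Real.norm_of_nonneg (mul_nonneg (sq_nonneg _) (hρm_nonneg x)),
        Real.norm_of_nonneg (hg_nonneg x)]
      exact hx.2.2.1
  have hbound_int : Integrable (fun x =>
      2 * (‖u x‖ ^ 2 * ρm x) + 2 * ∫ x₁, ‖w (x₁, x)‖ ^ 2 * ρj (x₁, x)) :=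
    (hu_int.const_mul 2).add (hg_int.const_mul 2)
  have hf2_int : Integrable (fun x => ‖u x - v x‖ ^ 2 * ρm x) := by
    refine hbound_int.mono ?_ ?_
    · exact hf2_meas.aestronglyMeasurable.congr
        (by filter_upwards [master] with x hx; exact hx.2.2.2.1.symm)
    · filter_upwards [master] with x hx
      have h0 : 0 ≤ ‖u x - v x‖ ^ 2 * ρm x := mul_nonneg (sq_nonneg _) (hρm_nonneg x)
      have hb := norm_sub_sq_le_two_mul (u x) (v x)
      have hb2 := mul_le_mul_of_nonneg_right hb (hρm_nonneg x)
      have hc := hx.2.2.1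
      have hg0 := hg_nonneg x
      have hum : 0 ≤ ‖u x‖ ^ 2 * ρm x := mul_nonneg (sq_nonneg _) (hρm_nonneg x)
      rw [Real.norm_of_nonneg h0, Real.norm_of_nonneg (add_nonneg
        (mul_nonneg zero_le_two hum) (mul_nonneg zero_le_two hg0))]
      nlinarith
  have hf1_meas : Measurable (fun x => ∫ x₁, ‖u x - w (x₁, x)‖ ^ 2 * ρj (x₁, x)) := by
    have hsm : StronglyMeasurable (fun p : EuclideanSpace ℝ (Fin d) × EuclideanSpace ℝ (Fin d)
        => ‖u p.2 - w p‖ ^ 2 * ρj p) :=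
      ((((hu_meas.comp measurable_snd).sub hw_meas).norm.pow_const 2).mul
        hρj_meas).stronglyMeasurable
    exact hsm.integral_prod_left'.measurable
  have hf1_int : Integrable (fun x => ∫ x₁, ‖u x - w (x₁, x)‖ ^ 2 * ρj (x₁, x)) := by
    refine hbound_int.mono hf1_meas.aestronglyMeasurable ?_
    filter_upwards [master] with x hx
    have h0 : 0 ≤ ∫ x₁, ‖u x - w (x₁, x)‖ ^ 2 * ρj (x₁, x) :=
      integral_nonneg fun x₁ => mul_nonneg (sq_nonneg _) (hρj_nonneg _)
    have hg0 := hg_nonneg x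
    have hum : 0 ≤ ‖u x‖ ^ 2 * ρm x := mul_nonneg (sq_nonneg _) (hρm_nonneg x)
    rw [Real.norm_of_nonneg h0, Real.norm_of_nonneg (add_nonneg
      (mul_nonneg zero_le_two hum) (mul_nonneg zero_le_two hg0))]
    exact hx.2.1
  -- conclude
  rw [← integral_sub hf1_int hf2_int, ← integral_sub hg_int hf4_int]
  exact integral_congr_ae (by filter_upwards [master] with x hx; exact hx.1)
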